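/- Let Ω ⊂ ℂ be a bounded, open, simply connected domain, φ : 𝔻 → Ω a conformal mapping, ρ a density on Ω, and q > 2. Then for every measurable function f : 𝔻 → ℝ, (∫_Ω |f(φ⁻¹(x))|² ρ(x) dx)^{1/2} ≤ (∫_𝔻 |f(y)|^q dy)^{1/q} · (∫_Ω (ρ(x)·|φ'(φ⁻¹(x))|^{4/q})^{q/(q−2)} dx)^{(q−2)/(2q)}, whenever the right-hand side is finite. (This estimates the norm of the composition operator (φ⁻¹)* : L^q(𝔻) → L²(Ω,ρ) by ‖ρ / J_{φ⁻¹}^{2/q}‖_{L^{q/(q−2)}(Ω)}^{1/2}.) -/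

import Mathlib

open MeasureTheory Metric Set
open scoped ENNReal NNReal Real

lemma det_aux (c : ℂ) :
    (((1 : ℂ →L[ℂ] ℂ).smulRight c).restrictScalars ℝ).det = ‖c‖ ^ 2 := by
  have : (((1 : ℂ →L[ℂ] ℂ).smulRight c).restrictScalars ℝ : ℂ →ₗ[ℝ] ℂ).det = ‖c‖^2 := by
    rw [← LinearMap.det_toMatrix Complex.basisOneI, Matrix.det_fin_two]
    simp [LinearMap.toMatrix_apply, Complex.coe_basisOneI_repr, Complex.mul_re, Complex.mul_im,
      Complex.sq_norm, Complex.normSq_apply]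
  exact this

lemma hasfd (φ : ℂ → ℂ) (hφdiff : DifferentiableOn ℂ φ (ball 0 1)) :
    ∀ y ∈ ball (0:ℂ) 1, HasFDerivWithinAt φ
      (((1 : ℂ →L[ℂ] ℂ).smulRight (deriv φ y)).restrictScalars ℝ) (ball (0:ℂ) 1) y := by
  intro y hy
  have hd : DifferentiableAt ℂ φ y := hφdiff.differentiableAt (isOpen_ball.mem_nhds hy)
  exact (hd.hasDerivAt.hasFDerivAt.restrictScalars ℝ).hasFDerivWithinAt

lemma cov (φ : ℂ → ℂ) (hφdiff : DifferentiableOn ℂ φ (ball 0 1))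
    (hinj : InjOn φ (ball (0:ℂ) 1)) (g : ℂ → ℝ) :
    ∫ x in φ '' ball (0:ℂ) 1, g x = ∫ y in ball (0:ℂ) 1, ‖deriv φ y‖ ^ 2 * g (φ y) := by
  rw [integral_image_eq_integral_abs_det_fderiv_smul volume measurableSet_ball
    (hasfd φ hφdiff) hinj g]
  refine setIntegral_congr_fun measurableSet_ball fun y hy => ?_
  rw [det_aux, abs_of_nonneg (by positivity), smul_eq_mul]

lemma cov_int (φ : ℂ → ℂ) (hφdiff : DifferentiableOn ℂ φ (ball 0 1))
    (hinj : InjOn φ (ball (0:ℂ) 1)) (g : ℂ → ℝ) :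
    IntegrableOn g (φ '' ball (0:ℂ) 1) ↔
      IntegrableOn (fun y => ‖deriv φ y‖ ^ 2 * g (φ y)) (ball (0:ℂ) 1) := by
  rw [integrableOn_image_iff_integrableOn_abs_det_fderiv_smul volume measurableSet_ball
    (hasfd φ hφdiff) hinj g]
  refine integrableOn_congr_fun (fun y hy => ?_) measurableSet_ball
  rw [det_aux, abs_of_nonneg (by positivity), smul_eq_mul]

lemma pointwise_aux {q : ℝ} (hq : 2 < q) {v d : ℝ} (hv : 0 < v) (hd : 0 < d) :
    d ^ 2 * (v * d ^ (4/q)) ^ (q/(q-2)) = (v * d ^ 2) ^ (q/(q-2)) := by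
  have hq0 : (0:ℝ) < q := by linarith
  have hq2 : (0:ℝ) < q - 2 := by linarith
  rw [Real.mul_rpow hv.le (Real.rpow_nonneg hd.le _),
    Real.mul_rpow hv.le (by positivity), ← Real.rpow_natCast d 2,
    ← Real.rpow_mul hd.le, ← Real.rpow_mul hd.le, mul_left_comm, ← Real.rpow_add hd]
  congr 1
  push_cast
  field_simp
  ring

lemma memLp_of_int {α : Type*} [MeasurableSpace α] {μ : Measure α} {g : α → ℝ} {p : ℝ}
    (hp : 0 < p) (hg : AEStronglyMeasurable g μ)
    (h : Integrable (fun x => ‖g x‖ ^ p) μ) : MemLp g (ENNReal.ofReal p) μ := by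
  have h0 : ENNReal.ofReal p ≠ 0 := by simp [hp, hp.le, ENNReal.ofReal_eq_zero, not_le]
  have := (memLp_norm_rpow_iff (p := ENNReal.ofReal p) hg h0 ENNReal.ofReal_ne_top).1 ?_
  · exact this
  rw [ENNReal.div_self h0 ENNReal.ofReal_ne_top, ENNReal.toReal_ofReal hp.le]
  exact memLp_one_iff_integrable.2 h

/-- Norm estimate of the composition operator
`(φ⁻¹)* : L^q(𝔻) → L²(Ω,ρ)` by `‖ρ / J_{φ⁻¹}^{2/q}‖_{L^{q/(q−2)}(Ω)}^{1/2}`,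
where `ρ/J_{φ⁻¹}^{2/q} = ρ(x)·|φ'(φ⁻¹(x))|^{4/q}`. -/
theorem composition_operator_Lq_to_weighted_L2
    (Ω : Set ℂ) (hΩopen : IsOpen Ω) (hΩbdd : Bornology.IsBounded Ω)
    (hΩsc : SimplyConnectedSpace Ω)
    (φ φinv : ℂ → ℂ)
    (hφdiff : DifferentiableOn ℂ φ (ball (0:ℂ) 1))
    (hφderiv : ∀ y ∈ ball (0:ℂ) 1, deriv φ y ≠ 0)
    (hφbij : Set.BijOn φ (ball (0:ℂ) 1) Ω)
    (hφinv : Set.InvOn φinv φ (ball (0:ℂ) 1) Ω)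
    (ρ : ℂ → ℝ) (hρcont : ContinuousOn ρ Ω) (hρpos : ∀ x ∈ Ω, 0 < ρ x)
    (hρint : IntegrableOn ρ Ω)
    (q : ℝ) (hq : 2 < q)
    (f : ℂ → ℝ) (hfm : Measurable f)
    (hfq : IntegrableOn (fun y => |f y| ^ q) (ball (0:ℂ) 1))
    (hKint : IntegrableOn
      (fun x => (ρ x * ‖deriv φ (φinv x)‖ ^ (4/q)) ^ (q/(q-2))) Ω) :
    (∫ x in Ω, |f (φinv x)| ^ 2 * ρ x) ^ ((1:ℝ)/2) ≤
      (∫ y in ball (0:ℂ) 1, |f y| ^ q) ^ (1/q) *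
        (∫ x in Ω, (ρ x * ‖deriv φ (φinv x)‖ ^ (4/q)) ^ (q/(q-2))) ^ ((q-2)/(2*q)) := by
  have hq0 : (0:ℝ) < q := by linarith
  have hq2 : (0:ℝ) < q - 2 := by linarith
  set D : Set ℂ := ball (0:ℂ) 1 with hD
  set r : ℝ := q / (q - 2) with hr
  have hr0 : 0 < r := by positivity
  have himg : φ '' D = Ω := hφbij.image_eq
  have hinj : InjOn φ D := hφbij.injOn
  set w : ℂ → ℝ := fun y => ρ (φ y) * ‖deriv φ y‖ ^ 2 with hw
  have hwpos : ∀ y ∈ D, 0 < w y := fun y hy =>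
    mul_pos (hρpos _ (hφbij.mapsTo hy)) (pow_pos (norm_pos_iff.2 (hφderiv y hy)) 2)
  -- pointwise identity inside the second integral
  have hpt : ∀ y ∈ D, ‖deriv φ y‖ ^ 2 * (ρ (φ y) * ‖deriv φ y‖ ^ (4/q)) ^ r = w y ^ r := by
    intro y hy
    have hd : 0 < ‖deriv φ y‖ := norm_pos_iff.2 (hφderiv y hy)
    exact pointwise_aux hq (hρpos _ (hφbij.mapsTo hy)) hd
  -- change of variables for the first integral
  have Eq1 : ∫ x in Ω, |f (φinv x)| ^ 2 * ρ x = ∫ y in D, |f y| ^ 2 * w y := by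
    rw [← himg, cov φ hφdiff hinj]
    refine setIntegral_congr_fun measurableSet_ball fun y hy => ?_
    rw [hφinv.1 hy]; simp only [hw]; ring
  -- change of variables for the second integral
  have Eq2 : ∫ x in Ω, (ρ x * ‖deriv φ (φinv x)‖ ^ (4/q)) ^ r = ∫ y in D, w y ^ r := by
    rw [← himg, cov φ hφdiff hinj]
    refine setIntegral_congr_fun measurableSet_ball fun y hy => ?_
    rw [hφinv.1 hy]; exact hpt y hy
  -- integrability of w ^ r on D
  have IntW : IntegrableOn (fun y => w y ^ r) D := by
    rw [← himg] at hKint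
    have := (cov_int φ hφdiff hinj _).1 hKint
    refine this.congr_fun (fun y hy => ?_) measurableSet_ball
    beta_reduce
    rw [hφinv.1 hy]; exact hpt y hy
  -- measurability of w
  have hwc : ContinuousOn w D := by
    have hcd : ContinuousOn (deriv φ) D :=
      ((hφdiff.analyticOnNhd isOpen_ball).deriv).continuousOn
    exact (hρcont.comp hφdiff.continuousOn hφbij.mapsTo).mul ((hcd.norm).pow 2)
  have hwm : AEStronglyMeasurable w (volume.restrict D) :=
    hwc.aestronglyMeasurable measurableSet_ball
  -- Memℒp statements
  have hwae : ∀ᵐ y ∂(volume.restrict D), 0 ≤ w y :=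
    (ae_restrict_iff' measurableSet_ball).2 (Filter.Eventually.of_forall
      fun y hy => (hwpos y hy).le)
  have hWmem : MemLp w (ENNReal.ofReal r) (volume.restrict D) := by
    refine memLp_of_int hr0 hwm ?_
    refine IntW.congr ?_
    filter_upwards [hwae] with y hy
    show w y ^ r = ‖w y‖ ^ r
    rw [Real.norm_of_nonneg hy]
  have hFmem : MemLp (fun y => |f y| ^ 2) (ENNReal.ofReal (q/2)) (volume.restrict D) := by
    refine memLp_of_int (by positivity) ((hfm.abs.pow_const 2).aestronglyMeasurable) ?_
    refine hfq.congr ?_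
    refine Filter.Eventually.of_forall fun y => ?_
    show |f y| ^ q = ‖|f y| ^ 2‖ ^ (q / 2)
    rw [Real.norm_of_nonneg (by positivity), ← Real.rpow_natCast |f y| 2,
      ← Real.rpow_mul (abs_nonneg _)]
    norm_num
    congr 1
    ring
  -- Hölder
  have hpq : Real.HolderConjugate (q/2) r := by
    rw [Real.holderConjugate_iff]
    constructor
    · linarith
    · rw [hr, inv_div, inv_div, ← add_div, add_sub_cancel, div_self hq0.ne']
  have holder := integral_mul_le_Lp_mul_Lq_of_nonneg hpq
    (Filter.Eventually.of_forall fun y => by positivity) hwae hFmem hWmem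
  have hAeq : ∫ y in D, (|f y| ^ 2 : ℝ) ^ (q/2) = ∫ y in D, |f y| ^ q := by
    refine integral_congr_ae (Filter.Eventually.of_forall fun y => ?_)
    show (|f y| ^ 2 : ℝ) ^ (q / 2) = |f y| ^ q
    rw [← Real.rpow_natCast |f y| 2, ← Real.rpow_mul (abs_nonneg _)]
    norm_num
    congr 1
    ring
  rw [hAeq] at holder
  -- nonnegativity of all integrals
  have hLnn : 0 ≤ ∫ x in Ω, |f (φinv x)| ^ 2 * ρ x :=
    setIntegral_nonneg hΩopen.measurableSet fun x hx =>
      mul_nonneg (by positivity) (hρpos x hx).le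
  have hAnn : 0 ≤ ∫ y in D, |f y| ^ q :=
    setIntegral_nonneg measurableSet_ball fun y _ => Real.rpow_nonneg (abs_nonneg _) _
  have hBnn : 0 ≤ ∫ x in Ω, (ρ x * ‖deriv φ (φinv x)‖ ^ (4/q)) ^ r :=
    setIntegral_nonneg hΩopen.measurableSet fun x hx =>
      Real.rpow_nonneg (mul_nonneg (hρpos x hx).le (Real.rpow_nonneg (norm_nonneg _) _)) _
  -- assemble
  have key : (∫ x in Ω, |f (φinv x)| ^ 2 * ρ x) ≤
      (∫ y in D, |f y| ^ q) ^ (1/(q/2)) *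
        (∫ x in Ω, (ρ x * ‖deriv φ (φinv x)‖ ^ (4/q)) ^ r) ^ (1/r) := by
    rw [Eq1, Eq2]; exact holder
  calc (∫ x in Ω, |f (φinv x)| ^ 2 * ρ x) ^ ((1:ℝ)/2)
      ≤ ((∫ y in D, |f y| ^ q) ^ (1/(q/2)) *
          (∫ x in Ω, (ρ x * ‖deriv φ (φinv x)‖ ^ (4/q)) ^ r) ^ (1/r)) ^ ((1:ℝ)/2) :=
        Real.rpow_le_rpow hLnn key (by norm_num)
    _ = (∫ y in D, |f y| ^ q) ^ (1/q) *
          (∫ x in Ω, (ρ x * ‖deriv φ (φinv x)‖ ^ (4/q)) ^ r) ^ ((q-2)/(2*q)) := by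
        rw [Real.mul_rpow (Real.rpow_nonneg hAnn _) (Real.rpow_nonneg hBnn _),
          ← Real.rpow_mul hAnn, ← Real.rpow_mul hBnn]
        have e1 : (1/(q/2)) * ((1:ℝ)/2) = 1/q := by
          rw [one_div_div]; field_simp
        have e2 : (1/r) * ((1:ℝ)/2) = (q-2)/(2*q) := by
          rw [hr, one_div_div, div_mul_div_comm, mul_one, mul_comm q 2]
        rw [e1, e2]
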